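/- Let p > 2 be a real number, let X be a real normed space, let n be a positive integer, and let x, y ∈ X satisfy ‖x‖^p = 1/n and ‖y‖^p ≤ 1. Define σ := ‖x−y‖^p/(‖x‖^p + ‖y‖^p) and α := (‖x‖^p + ‖y‖^p)/2, and suppose u ∈ [−1,1] satisfies σ = (1−u)^p/(1+|u|^p). Then |u| ≤ c₁·n^{−1/p}·α^{−1/p}, where c₁ := max(2^{1−1/p}, 1/(2 − 2^{1/p})). -/
import Mathlib

lemma twoPointAux {p : ℝ} (hp : 1 < p) {x₁ x₂ y₁ y₂ : ℝ} (hx₂ : 0 ≤ x₂)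
    (h1 : x₂ < y₁) (h2 : y₁ < x₁) (hsum : x₁ + x₂ = y₁ + y₂) :
    y₁ ^ p + y₂ ^ p < x₁ ^ p + x₂ ^ p := by
  have hx₁ : (0:ℝ) ≤ x₁ := le_of_lt (lt_trans (lt_of_le_of_lt hx₂ h1) h2)
  have hconv := strictConvexOn_rpow hp
  have hd : 0 < x₁ - x₂ := by linarith
  set t : ℝ := (y₁ - x₂) / (x₁ - x₂) with ht
  have ht0 : 0 < t := div_pos (by linarith) hd
  have ht1 : t < 1 := (div_lt_one hd).2 (by linarith)
  have e : t * (x₁ - x₂) = y₁ - x₂ := div_mul_cancel₀ _ hd.ne'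
  have hy₁ : y₁ = t * x₁ + (1 - t) * x₂ := by linear_combination -e
  have hy₂ : y₂ = (1 - t) * x₁ + t * x₂ := by
    have h : y₂ = x₁ + x₂ - y₁ := by linarith
    rw [h, hy₁]; ring
  have hne : x₁ ≠ x₂ := by linarith
  have A := hconv.2 (Set.mem_Ici.2 hx₁) (Set.mem_Ici.2 hx₂) hne ht0
    (show (0:ℝ) < 1 - t by linarith) (show t + (1 - t) = 1 by ring)
  have B := hconv.2 (Set.mem_Ici.2 hx₁) (Set.mem_Ici.2 hx₂) hne
    (show (0:ℝ) < 1 - t by linarith) ht0 (show (1 - t) + t = 1 by ring)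
  simp only [smul_eq_mul] at A B
  rw [← hy₁] at A
  rw [← hy₂] at B
  linarith

lemma phiStrict {p : ℝ} (hp : 1 < p) {s v : ℝ} (hs : 0 ≤ s) (hsv : s < v) (hv : v ≤ 1) :
    (1 + s) ^ p * (1 + v ^ p) < (1 + v) ^ p * (1 + s ^ p) := by
  have key := twoPointAux hp (x₁ := 1 + v) (x₂ := (1 + v) * s) (y₁ := 1 + s) (y₂ := (1 + s) * v)
    (by nlinarith) (by nlinarith) (by nlinarith) (by ring)
  have e1 : ((1 + s) * v) ^ p = (1 + s) ^ p * v ^ p :=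
    Real.mul_rpow (by linarith) (by linarith)
  have e2 : ((1 + v) * s) ^ p = (1 + v) ^ p * s ^ p :=
    Real.mul_rpow (by linarith) hs
  rw [e1, e2] at key
  nlinarith

theorem stmt_3 (p : ℝ) (hp : 2 < p) {X : Type*} [NormedAddCommGroup X] [NormedSpace ℝ X]
    (n : ℕ) (hn : 0 < n) (x y : X)
    (hx : ‖x‖ ^ p = 1 / (n : ℝ)) (hy : ‖y‖ ^ p ≤ 1)
    (u : ℝ) (hu : u ∈ Set.Icc (-1 : ℝ) 1)
    (hσ : ‖x - y‖ ^ p / (‖x‖ ^ p + ‖y‖ ^ p) = (1 - u) ^ p / (1 + |u| ^ p)) :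
    |u| ≤ max ((2:ℝ) ^ (1 - 1 / p)) (1 / (2 - (2:ℝ) ^ (1 / p))) *
        (n : ℝ) ^ (-(1 / p)) * ((‖x‖ ^ p + ‖y‖ ^ p) / 2) ^ (-(1 / p)) := by
  obtain ⟨hu1, hu2⟩ := hu
  have hp0 : (0:ℝ) < p := by linarith
  have hp1 : 1 < p := by linarith
  set a := ‖x‖ with ha_def
  set b := ‖y‖ with hb_def
  have ha' : (0:ℝ) ≤ a := norm_nonneg x
  have hb' : (0:ℝ) ≤ b := norm_nonneg y
  have hn0 : (0:ℝ) < 1 / n := by positivity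
  have ha0 : 0 < a := by
    rcases ha'.lt_or_eq with h | h
    · exact h
    · exfalso
      rw [← h, Real.zero_rpow hp0.ne'] at hx
      linarith
  have hap : 0 < a ^ p := Real.rpow_pos_of_pos ha0 p
  have hbp : 0 ≤ b ^ p := Real.rpow_nonneg hb' p
  set m := max a b with hm_def
  have hm0 : 0 < m := lt_of_lt_of_le ha0 (le_max_left _ _)
  set α := (a ^ p + b ^ p) / 2 with hα_def
  have hα0 : 0 < α := by
    rw [hα_def]; linarith
  -- n ^ (-(1/p)) = a
  have hna : (n : ℝ) ^ (-(1 / p)) = a := by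
    have h1 : ((n:ℝ))⁻¹ = a ^ p := by rw [hx, one_div]
    have h2 : (n : ℝ) ^ (-(1 / p)) = ((n:ℝ)⁻¹) ^ (1 / p) := by
      rw [Real.inv_rpow (by positivity), ← Real.rpow_neg (by positivity)]
    rw [h2, h1, ← Real.rpow_mul ha', mul_one_div, div_self hp0.ne', Real.rpow_one]
  rw [hna]
  -- α ≤ m ^ p and hence m⁻¹ ≤ α ^ (-(1/p))
  have hαm : α ≤ m ^ p := by
    have h1 : a ^ p ≤ m ^ p := Real.rpow_le_rpow ha' (le_max_left a b) hp0.le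
    have h2 : b ^ p ≤ m ^ p := Real.rpow_le_rpow hb' (le_max_right a b) hp0.le
    rw [hα_def]; linarith
  have hinv : m⁻¹ ≤ α ^ (-(1 / p)) := by
    have h1 : α ^ (1 / p) ≤ (m ^ p) ^ (1 / p) :=
      Real.rpow_le_rpow hα0.le hαm (by positivity)
    have h2 : (m ^ p) ^ (1 / p) = m := by
      rw [← Real.rpow_mul hm0.le, mul_one_div, div_self hp0.ne', Real.rpow_one]
    have h3 : 0 < α ^ (1 / p) := Real.rpow_pos_of_pos hα0 _
    rw [Real.rpow_neg hα0.le]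
    rw [h2] at h1
    exact inv_anti₀ h3 h1
  -- the constant is at least 1
  set c := max ((2:ℝ) ^ (1 - 1 / p)) (1 / (2 - (2:ℝ) ^ (1 / p))) with hc_def
  have hc1 : (1:ℝ) ≤ c := by
    have h0 : (0:ℝ) ≤ 1 - 1 / p := by
      have : 1 / p < 1 := by rw [div_lt_one hp0]; linarith
      linarith
    have : (1:ℝ) = (2:ℝ) ^ (0:ℝ) := (Real.rpow_zero 2).symm
    calc (1:ℝ) = (2:ℝ) ^ (0:ℝ) := (Real.rpow_zero 2).symm
      _ ≤ (2:ℝ) ^ (1 - 1 / p) := Real.rpow_le_rpow_of_exponent_le one_le_two h0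
      _ ≤ c := le_max_left _ _
  -- reduce to |u| ≤ a / m
  have hmain : |u| ≤ a / m := by
    rcases le_or_gt b a with h | h
    · rw [hm_def, max_eq_left h, div_self ha0.ne']
      exact abs_le.2 ⟨hu1, hu2⟩
    · have hb0 : 0 < b := lt_trans ha0 h
      rw [hm_def, max_eq_right h.le]
      set s := a / b with hs_def
      have hs0 : 0 < s := div_pos ha0 hb0
      have hs1 : s < 1 := (div_lt_one hb0).2 h
      have hbp0 : 0 < b ^ p := Real.rpow_pos_of_pos hb0 p
      have hsp : s ^ p = a ^ p / b ^ p := Real.div_rpow ha' hb0.le p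
      have hden1 : 0 < 1 + s ^ p := by positivity
      have hdenu : 0 < 1 + |u| ^ p := by positivity
      have hD : a ^ p + b ^ p = b ^ p * (1 + s ^ p) := by
        rw [hsp]; field_simp; ring
      have hxy_low : b - a ≤ ‖x - y‖ := by
        have h' := norm_sub_norm_le y x
        rw [norm_sub_rev y x] at h'
        exact h'
      have hxy_up : ‖x - y‖ ≤ a + b := norm_sub_le x y
      have hxyp : 0 ≤ ‖x - y‖ ^ p := Real.rpow_nonneg (norm_nonneg _) p
      have hσ_low : (1 - s) ^ p / (1 + s ^ p) ≤ (1 - u) ^ p / (1 + |u| ^ p) := by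
        rw [← hσ]
        have e1 : (1 - s) ^ p = (b - a) ^ p / b ^ p := by
          rw [← Real.div_rpow (by linarith) hb0.le]
          congr 1
          rw [hs_def]
          field_simp
        rw [e1, hD, div_div]
        exact (div_le_div_iff_of_pos_right (by positivity)).2
          (Real.rpow_le_rpow (by linarith) hxy_low hp0.le)
      have hσ_up : (1 - u) ^ p / (1 + |u| ^ p) ≤ (1 + s) ^ p / (1 + s ^ p) := by
        rw [← hσ]
        have e2 : (1 + s) ^ p = (a + b) ^ p / b ^ p := by
          rw [← Real.div_rpow (by linarith) hb0.le]
          congr 1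
          rw [hs_def]
          field_simp
          ring
        rw [e2, hD, div_div]
        exact (div_le_div_iff_of_pos_right (by positivity)).2
          (Real.rpow_le_rpow (norm_nonneg _) hxy_up hp0.le)
      have hus : u ≤ s := by
        by_contra hc'
        push_neg at hc'
        have h1u : (0:ℝ) ≤ 1 - u := by linarith
        have hnum : (1 - u) ^ p < (1 - s) ^ p := Real.rpow_lt_rpow h1u (by linarith) hp0
        have hsp_le : s ^ p ≤ |u| ^ p :=
          Real.rpow_le_rpow hs0.le (le_trans hc'.le (le_abs_self u)) hp0.le
        have hden : 1 + s ^ p ≤ 1 + |u| ^ p := by linarith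
        have hlt : (1 - u) ^ p / (1 + |u| ^ p) < (1 - s) ^ p / (1 + s ^ p) := by
          calc (1 - u) ^ p / (1 + |u| ^ p) ≤ (1 - u) ^ p / (1 + s ^ p) := by
                gcongr <;> linarith [hsp_le]
            _ < (1 - s) ^ p / (1 + s ^ p) := (div_lt_div_iff_of_pos_right hden1).2 hnum
        linarith
      have hsu : -s ≤ u := by
        by_contra hc'
        push_neg at hc'
        have hv : s < -u := by linarith
        have hv1 : -u ≤ 1 := by linarith
        have key := phiStrict hp1 hs0.le hv hv1
        have habs : |u| = -u := abs_of_neg (by linarith)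
        have e1u : (1:ℝ) - u = 1 + (-u) := by ring
        have hdenv : (0:ℝ) < 1 + (-u) ^ p := by
          have := Real.rpow_nonneg (by linarith : (0:ℝ) ≤ -u) p
          linarith
        have hlt : (1 + s) ^ p / (1 + s ^ p) < (1 + (-u)) ^ p / (1 + (-u) ^ p) :=
          (div_lt_div_iff₀ hden1 hdenv).2 (by linarith)
        rw [e1u, habs] at hσ_up
        linarith
      exact abs_le.2 ⟨by linarith, hus⟩
  calc |u| ≤ a / m := hmain
    _ = 1 * a * m⁻¹ := by rw [one_mul, div_eq_mul_inv]
    _ ≤ c * a * α ^ (-(1 / p)) := by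
        apply mul_le_mul (mul_le_mul hc1 le_rfl ha' (by linarith)) hinv
          (by positivity) (by positivity)
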